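/- Let 𝔅 be a bornology on a metric space X with closed base. Then X has the 𝔅^s-Gerlits–Nagy property (i.e., X satisfies S₁(𝒪_{𝔅^s}, 𝒪_{𝔅^s}^{gp})) if and only if X has the 𝔅^s-Hurewicz property and X satisfies S₁(𝒪_{𝔅^s}, 𝒪_{𝔅^s}). -/

import Mathlib

def IsBornologyOn {α : Type*} (𝔅 : Set (Set α)) : Prop :=
  (⋃₀ 𝔅 = Set.univ) ∧ (∀ B ∈ 𝔅, ∀ A ⊆ B, A ∈ 𝔅) ∧ (∀ A ∈ 𝔅, ∀ B ∈ 𝔅, A ∪ B ∈ 𝔅)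

def IsBaseFor {α : Type*} (𝔅 𝔅₀ : Set (Set α)) : Prop :=
  𝔅₀ ⊆ 𝔅 ∧ ∀ B ∈ 𝔅, ∃ B₀ ∈ 𝔅₀, B ⊆ B₀

def enl {α : Type*} [MetricSpace α] (B : Set α) (δ : ℝ) : Set α :=
  ⋃ x ∈ B, Metric.ball x δ

def BsCover {α : Type*} [MetricSpace α] (𝔅 𝒰 : Set (Set α)) : Prop :=
  (∀ u ∈ 𝒰, IsOpen u) ∧ Set.univ ∉ 𝒰 ∧
    ∀ B ∈ 𝔅, ∃ u ∈ 𝒰, ∃ δ > 0, enl B δ ⊆ u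

def S1_O {α : Type*} [MetricSpace α] (𝔅 : Set (Set α)) : Prop :=
  ∀ U : ℕ → Set (Set α), (∀ n, BsCover 𝔅 (U n)) →
    ∃ f : ℕ → Set α, (∀ n, f n ∈ U n) ∧ BsCover 𝔅 (Set.range f)

def BsHurewicz {α : Type*} [MetricSpace α] (𝔅 : Set (Set α)) : Prop :=
  ∀ U : ℕ → Set (Set α), (∀ n, BsCover 𝔅 (U n)) →
    ∃ V : ℕ → Set (Set α), (∀ n, V n ⊆ U n) ∧ (∀ n, (V n).Finite) ∧
      ∀ B ∈ 𝔅, ∃ n₀ : ℕ, ∀ n ≥ n₀, ∃ δ > 0, ∃ u ∈ V n, enl B δ ⊆ u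

def BsGroupable {α : Type*} [MetricSpace α] (𝔅 𝒰 : Set (Set α)) : Prop :=
  (∀ u ∈ 𝒰, IsOpen u) ∧ ⋃₀ 𝒰 = Set.univ ∧
    ∃ V : ℕ → Set (Set α), (∀ n, (V n).Finite) ∧
      (∀ m n, m ≠ n → Disjoint (V m) (V n)) ∧ (⋃ n, V n) = 𝒰 ∧
      ∀ B ∈ 𝔅, ∃ n₀ : ℕ, ∀ n ≥ n₀, ∃ δ > 0, ∃ u ∈ V n, enl B δ ⊆ u

def S1_GN {α : Type*} [MetricSpace α] (𝔅 : Set (Set α)) : Prop :=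
  ∀ U : ℕ → Set (Set α), (∀ n, BsCover 𝔅 (U n)) →
    ∃ f : ℕ → Set α, (∀ n, f n ∈ U n) ∧ BsGroupable 𝔅 (Set.range f)

open Set

section Helpers

variable {X : Type*} [MetricSpace X]

lemma mem_enl_self {B : Set X} {δ : ℝ} (hδ : 0 < δ) {x : X} (hx : x ∈ B) : x ∈ enl B δ :=
  Set.mem_biUnion hx (Metric.mem_ball_self hδ)

lemma enl_mono {B B' : Set X} {δ δ' : ℝ} (hB : B ⊆ B') (hδ : δ ≤ δ') :
    enl B δ ⊆ enl B' δ' := by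
  intro y hy
  simp only [enl, Set.mem_iUnion₂] at hy ⊢
  obtain ⟨x, hx, hball⟩ := hy
  exact ⟨x, hB hx, Metric.ball_subset_ball hδ hball⟩

lemma finite_mem_born {𝔅 : Set (Set X)} [Nonempty X] (hb : IsBornologyOn 𝔅)
    {s : Set X} (hs : s.Finite) : s ∈ 𝔅 := by
  have hsing : ∀ y : X, {y} ∈ 𝔅 := by
    intro y
    have hy : y ∈ ⋃₀ 𝔅 := by rw [hb.1]; exact mem_univ y
    obtain ⟨B, hB, hyB⟩ := hy
    exact hb.2.1 B hB {y} (singleton_subset_iff.2 hyB)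
  refine Set.Finite.induction_on (motive := fun s _ => s ∈ 𝔅) s hs ?_ ?_
  · exact hb.2.1 {Classical.arbitrary X} (hsing _) ∅ (empty_subset _)
  · intro a t _ _ ih
    rw [Set.insert_eq]
    exact hb.2.2 {a} (hsing a) t ih

/-- A `𝔅ˢ`-cover of a nonempty space cannot be finite. -/
lemma bsCover_not_finite {𝔅 𝒰 : Set (Set X)} [Nonempty X] (hb : IsBornologyOn 𝔅)
    (hc : BsCover 𝔅 𝒰) : ¬ 𝒰.Finite := by
  intro hfin
  have hx : ∀ u : Set X, ∃ y, u ∈ 𝒰 → y ∉ u := by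
    intro u
    by_cases hu : u ∈ 𝒰
    · have hne : u ≠ univ := fun h => hc.2.1 (h ▸ hu)
      obtain ⟨y, hy⟩ := (ne_univ_iff_exists_notMem _).1 hne
      exact ⟨y, fun _ => hy⟩
    · exact ⟨Classical.arbitrary X, fun h => absurd h hu⟩
  choose x hx using hx
  have hB : x '' 𝒰 ∈ 𝔅 := finite_mem_born hb (hfin.image x)
  obtain ⟨u, hu, δ, hδ, hsub⟩ := hc.2.2 _ hB
  exact hx u hu (hsub (mem_enl_self hδ (mem_image_of_mem x hu)))

/-- the "shifted" covers obtained from a countable `𝔅ˢ`-cover. -/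
lemma shift_cover {𝔅 : Set (Set X)} [Nonempty X] (hb : IsBornologyOn 𝔅)
    {e : ℕ → Set X} (hc : BsCover 𝔅 (range e)) (n : ℕ) : BsCover 𝔅 (e '' Set.Ici n) := by
  have hx : ∀ m : ℕ, ∃ y, y ∉ e m := by
    intro m
    have : e m ≠ univ := fun h => hc.2.1 (h ▸ mem_range_self m)
    exact (ne_univ_iff_exists_notMem _).1 this
  choose x hx using hx
  refine ⟨fun u hu => hc.1 u (image_subset_range e _ hu), ?_, ?_⟩
  · intro h
    exact hc.2.1 (image_subset_range e _ h)
  · intro B hB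
    have hB' : B ∪ x '' Set.Iio n ∈ 𝔅 :=
      hb.2.2 B hB _ (finite_mem_born hb ((Set.finite_Iio n).image x))
    obtain ⟨u, hu, δ, hδ, hsub⟩ := hc.2.2 _ hB'
    obtain ⟨m, rfl⟩ := hu
    have hm : n ≤ m := by
      by_contra h
      push_neg at h
      have h1 : x m ∈ B ∪ x '' Set.Iio n := Or.inr ⟨m, h, rfl⟩
      exact hx m (hsub (mem_enl_self hδ h1))
    exact ⟨e m, mem_image_of_mem e hm, δ, hδ,
      (enl_mono subset_union_left le_rfl).trans hsub⟩

/-- A countable infinite `𝔅ˢ`-cover of a `𝔅ˢ`-Hurewicz space is `𝔅ˢ`-groupable. -/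
lemma countable_cover_groupable {𝔅 : Set (Set X)} [Nonempty X] (hb : IsBornologyOn 𝔅)
    (hH : BsHurewicz 𝔅) {e : ℕ → Set X} (he : Function.Injective e)
    (hc : BsCover 𝔅 (range e)) : BsGroupable 𝔅 (range e) := by
  classical
  obtain ⟨V, hVsub, hVfin, hVev⟩ := hH (fun n => e '' Set.Ici n) (shift_cover hb hc)
  set ψ : ℕ → Set X → ℕ := fun n w =>
    if h : ∃ i, n ≤ i ∧ e i = w then h.choose else 0 with hψdef
  have hψ : ∀ n w, w ∈ V n → n ≤ ψ n w ∧ e (ψ n w) = w := by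
    intro n w hw
    obtain ⟨i, hi, rfl⟩ := hVsub n hw
    have hex : ∃ i', n ≤ i' ∧ e i' = e i := ⟨i, hi, rfl⟩
    simp only [hψdef, dif_pos hex]
    exact hex.choose_spec
  have hbdd : ∀ n, ∃ b, ∀ i ∈ ψ n '' V n, i ≤ b := by
    intro n
    obtain ⟨b, hbub⟩ := ((hVfin n).image (ψ n)).bddAbove
    exact ⟨b, fun i hi => hbub hi⟩
  choose b hbspec using hbdd
  set m : ℕ → ℕ := fun k => Nat.rec 0 (fun _ mk => max mk (b mk) + 1) k with hmdef
  have hm : ∀ k, m (k + 1) = max (m k) (b (m k)) + 1 := fun _ => rfl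
  have hmlt : ∀ k, m k < m (k + 1) := fun k => by
    rw [hm]; exact lt_of_le_of_lt (le_max_left _ _) (Nat.lt_succ_self _)
  have hmono : StrictMono m := strictMono_nat_of_lt_succ hmlt
  have hle : ∀ k, k ≤ m k := fun k => hmono.le_apply
  have hcov : ∀ i, ∃ k, m k ≤ i ∧ i < m (k + 1) := by
    intro i
    induction i with
    | zero => exact ⟨0, le_rfl, hmlt 0⟩
    | succ i ih =>
        obtain ⟨k, hk1, hk2⟩ := ih
        by_cases h : i + 1 < m (k + 1)
        · exact ⟨k, le_trans hk1 (Nat.le_succ i), h⟩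
        · have : i + 1 = m (k + 1) := by omega
          exact ⟨k + 1, this.ge, this ▸ hmlt (k + 1)⟩
  refine ⟨fun u hu => hc.1 u hu, ?_, fun k => e '' Set.Ico (m k) (m (k + 1)), ?_, ?_, ?_, ?_⟩
  · apply eq_univ_of_forall
    intro y
    have hy : ({y} : Set X) ∈ 𝔅 := finite_mem_born hb (finite_singleton y)
    obtain ⟨u, hu, δ, hδ, hsub⟩ := hc.2.2 _ hy
    exact ⟨u, hu, hsub (mem_enl_self hδ rfl)⟩
  · exact fun k => (Set.finite_Ico _ _).image e
  · intro a cc hac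
    rw [Set.disjoint_left]
    rintro u ⟨i, hi, rfl⟩ ⟨i', hi', hei⟩
    have hii : i' = i := he hei
    subst hii
    have h1 := hi.1; have h2 := hi.2; have h3 := hi'.1; have h4 := hi'.2
    rcases lt_or_gt_of_ne hac with h | h
    · have h5 : m (a + 1) ≤ m cc := hmono.monotone (Nat.succ_le_of_lt h)
      omega
    · have h5 : m (cc + 1) ≤ m a := hmono.monotone (Nat.succ_le_of_lt h)
      omega
  · apply Set.eq_of_subset_of_subset
    · intro u hu
      rw [mem_iUnion] at hu
      obtain ⟨k, hk⟩ := hu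
      exact image_subset_range e _ hk
    · rintro u ⟨i, rfl⟩
      obtain ⟨k, hk1, hk2⟩ := hcov i
      exact mem_iUnion.2 ⟨k, mem_image_of_mem e ⟨hk1, hk2⟩⟩
  · intro B hB
    obtain ⟨n₀, hn₀⟩ := hVev B hB
    refine ⟨n₀, fun k hk => ?_⟩
    have hkm : n₀ ≤ m k := le_trans hk (hle k)
    obtain ⟨δ, hδ, u, hu, hsub⟩ := hn₀ (m k) hkm
    obtain ⟨h1, h2⟩ := hψ (m k) u hu
    have h3 : ψ (m k) u ≤ b (m k) := hbspec (m k) _ (mem_image_of_mem _ hu)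
    have h4 : ψ (m k) u < m (k + 1) := by rw [hm]; omega
    exact ⟨δ, hδ, u, ⟨ψ (m k) u, ⟨h1, h4⟩, h2⟩, hsub⟩

/-- `S₁(𝒪ˢ, 𝒪ˢ-gp)` implies `S₁(𝒪ˢ, 𝒪ˢ)`. -/
lemma gn_to_s1o {𝔅 : Set (Set X)} (hGN : S1_GN 𝔅) : S1_O 𝔅 := by
  intro U hU
  obtain ⟨f, hf, hopen, huniv, G, hGfin, hGdisj, hGU, hGev⟩ := hGN U hU
  refine ⟨f, hf, hopen, ?_, ?_⟩
  · rintro ⟨n, hn⟩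
    exact (hU n).2.1 (hn ▸ hf n)
  · intro B hB
    obtain ⟨n₀, h⟩ := hGev B hB
    obtain ⟨δ, hδ, u, hu, hsub⟩ := h n₀ le_rfl
    exact ⟨u, hGU ▸ mem_iUnion.2 ⟨n₀, hu⟩, δ, hδ, hsub⟩

/-- `S₁(𝒪ˢ, 𝒪ˢ-gp)` implies the `𝔅ˢ`-Hurewicz property. -/
lemma gn_to_hurewicz {𝔅 : Set (Set X)} (hGN : S1_GN 𝔅) : BsHurewicz 𝔅 := by
  classical
  intro U hU
  set W : ℕ → Set (Set X) := fun n =>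
    {s | ∃ c : ℕ → Set X, (∀ i, c i ∈ U i) ∧ s = ⋂ i ∈ Finset.range (n + 1), c i} with hWdef
  have hWc : ∀ n, BsCover 𝔅 (W n) := by
    intro n
    refine ⟨?_, ?_, ?_⟩
    · rintro u ⟨c, hcmem, rfl⟩
      exact isOpen_biInter_finset fun i _ => (hU i).1 _ (hcmem i)
    · rintro ⟨c, hcmem, hceq⟩
      have h0 : c 0 = univ := by
        apply eq_univ_of_univ_subset
        rw [hceq]
        exact iInter₂_subset 0 (Finset.mem_range.2 n.succ_pos)
      exact (hU 0).2.1 (h0 ▸ hcmem 0)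
    · intro B hB
      have h : ∀ i, ∃ u ∈ U i, ∃ δ > 0, enl B δ ⊆ u := fun i => (hU i).2.2 B hB
      choose cc hcc δ hδ hsub using h
      have hne : (Finset.range (n + 1)).Nonempty := ⟨0, Finset.mem_range.2 n.succ_pos⟩
      refine ⟨⋂ i ∈ Finset.range (n + 1), cc i, ⟨cc, hcc, rfl⟩,
        (Finset.range (n + 1)).inf' hne δ, ?_, ?_⟩
      · exact (Finset.lt_inf'_iff hne).2 fun i _ => hδ i
      · refine subset_iInter₂ fun i hi => ?_
        exact (enl_mono subset_rfl (Finset.inf'_le δ hi)).trans (hsub i)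
  obtain ⟨g, hg, -, -, G, hGfin, hGdisj, hGU, hGev⟩ := hGN W hWc
  have hgW : ∀ n, ∃ c : ℕ → Set X, (∀ i, c i ∈ U i) ∧
      g n = ⋂ i ∈ Finset.range (n + 1), c i := hg
  choose c hcmem hgc using hgW
  have hGsub : ∀ j, G j ⊆ range g := fun j => hGU ▸ subset_iUnion G j
  set φ : Set X → ℕ := fun w => if h : ∃ k, g k = w then h.choose else 0 with hφdef
  have hφ : ∀ w ∈ range g, g (φ w) = w := by
    rintro w ⟨k, rfl⟩
    have hex : ∃ k', g k' = g k := ⟨k, rfl⟩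
    simp only [hφdef, dif_pos hex]
    exact hex.choose_spec
  refine ⟨fun n => (fun k => c k n) '' (⋃ j ∈ Set.Iic (2 * n), φ '' G j), ?_, ?_, ?_⟩
  · rintro n u ⟨k, -, rfl⟩
    exact hcmem k n
  · intro n
    exact (Set.Finite.biUnion (Set.finite_Iic _) fun j _ => (hGfin j).image φ).image _
  · intro B hB
    obtain ⟨j₀, hj₀⟩ := hGev B hB
    have h' : ∀ j : ℕ, ∃ δ : ℝ, ∃ u : Set X, j₀ ≤ j → 0 < δ ∧ u ∈ G j ∧ enl B δ ⊆ u := by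
      intro j
      by_cases h : j₀ ≤ j
      · obtain ⟨δ, hδ, u, hu, hs⟩ := hj₀ j h
        exact ⟨δ, u, fun _ => ⟨hδ, hu, hs⟩⟩
      · exact ⟨1, ∅, fun h' => absurd h' h⟩
    choose δ u hspec using h'
    have hginj : ∀ j j', j₀ ≤ j → j₀ ≤ j' → φ (u j) = φ (u j') → j = j' := by
      intro j j' hj hj' hkeq
      by_contra hne
      have hu1 : u j ∈ G j := (hspec j hj).2.1
      have hu2 : u j' ∈ G j' := (hspec j' hj').2.1
      have : u j = u j' := by
        have e1 := hφ (u j) (hGsub j hu1)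
        have e2 := hφ (u j') (hGsub j' hu2)
        rw [← e1, ← e2, hkeq]
      exact Set.disjoint_left.1 (hGdisj j j' hne) hu1 (this ▸ hu2)
    refine ⟨j₀, fun n hn => ?_⟩
    -- pigeonhole: some j in [j₀, 2n] has witness index ≥ n
    have hpig : ∃ j, j₀ ≤ j ∧ j ≤ 2 * n ∧ n ≤ φ (u j) := by
      by_contra hcon
      push_neg at hcon
      have hsub' : (Finset.Icc j₀ (2 * n)).image (fun j => φ (u j)) ⊆ Finset.range n := by
        intro i hi
        obtain ⟨j, hj, rfl⟩ := Finset.mem_image.1 hi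
        rw [Finset.mem_Icc] at hj
        exact Finset.mem_range.2 (hcon j hj.1 hj.2)
      have hcard : ((Finset.Icc j₀ (2 * n)).image (fun j => φ (u j))).card
          = (Finset.Icc j₀ (2 * n)).card := by
        apply Finset.card_image_of_injOn
        intro a ha b hb hab
        rw [Finset.coe_Icc, Set.mem_Icc] at ha hb
        exact hginj a b ha.1 hb.1 hab
      have h1 := Finset.card_le_card hsub'
      rw [hcard, Nat.card_Icc, Finset.card_range] at h1
      omega
    obtain ⟨j, hj1, hj2, hj3⟩ := hpig
    obtain ⟨hδpos, huG, husub⟩ := hspec j hj1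
    set k := φ (u j) with hkdef
    have hgk : g k = u j := hφ (u j) (hGsub j huG)
    refine ⟨δ j, hδpos, c k n, ?_, ?_⟩
    · exact ⟨k, mem_biUnion hj2 (mem_image_of_mem φ huG), rfl⟩
    · have hsub2 : g k ⊆ c k n := by
        rw [hgc k]
        exact iInter₂_subset n (Finset.mem_range.2 (Nat.lt_succ_of_le hj3))
      exact husub.trans (hgk ▸ hsub2)

end Helpers

theorem stmt16 {X : Type*} [MetricSpace X]
    (𝔅 𝔅₀ : Set (Set X)) (hb : IsBornologyOn 𝔅) (hbase : IsBaseFor 𝔅 𝔅₀)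
    (hcl : ∀ B ∈ 𝔅₀, IsClosed B) :
    S1_GN 𝔅 ↔ (BsHurewicz 𝔅 ∧ S1_O 𝔅) := by
  constructor
  · intro hGN
    exact ⟨gn_to_hurewicz hGN, gn_to_s1o hGN⟩
  · rintro ⟨hH, hS1⟩ U hU
    obtain ⟨f, hf, hfc⟩ := hS1 U hU
    refine ⟨f, hf, ?_⟩
    cases isEmpty_or_nonempty X with
    | inl hempty =>
        exfalso
        have : f 0 = univ := Subsingleton.elim _ _
        exact (hU 0).2.1 (this ▸ hf 0)
    | inr hne =>
        have hinf : (range f).Infinite := bsCover_not_finite hb hfc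
        have hcnt : Countable (range f) := (countable_range f).to_subtype
        have hinf' : Infinite (range f) := Set.infinite_coe_iff.2 hinf
        obtain ⟨d⟩ := nonempty_denumerable (↥(range f))
        set e : ℕ → Set X := fun n => ((Denumerable.eqv (↥(range f))).symm n : Set X) with hedef
        have he : Function.Injective e := fun a b h =>
          (Denumerable.eqv (↥(range f))).symm.injective (Subtype.ext h)
        have hrange : range e = range f := by
          apply Set.eq_of_subset_of_subset
          · rintro u ⟨n, rfl⟩
            exact ((Denumerable.eqv (↥(range f))).symm n).2
          · intro u hu
            exact ⟨Denumerable.eqv (↥(range f)) ⟨u, hu⟩, by simp [hedef]⟩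
        have hcov' : BsCover 𝔅 (range e) := hrange ▸ hfc
        have := countable_cover_groupable hb hH he hcov'
        rwa [hrange] at this
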